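/- Fix m ∈ ℤ with m ≥ 0. There exists a constant C_m such that for all real x with |x| > 3, ∫_ℝ e^{-|z|} (1+|x-z|)^m e^{-|x-z|} dz ≤ C_m e^{-|x|} (1+|x|)^{m+1}. -/

import Mathlib

open MeasureTheory Real Set

private lemma exp_neg_abs_integrable : Integrable (fun z : ℝ => Real.exp (-|z|)) := by
  rw [← integrableOn_univ, ← Set.Iic_union_Ioi (a := (0:ℝ))]
  refine IntegrableOn.union ?_ ?_
  · exact (integrableOn_exp_Iic 0).congr_fun
      (fun z hz => by rw [abs_of_nonpos hz, neg_neg]) measurableSet_Iic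
  · exact (exp_neg_integrableOn_Ioi 0 one_pos).congr_fun
      (fun z hz => by rw [abs_of_pos hz]; norm_num) measurableSet_Ioi

private lemma pow_le_exp_aux (k : ℕ) :
    ∃ A : ℝ, 1 ≤ A ∧ ∀ t : ℝ, 0 ≤ t → (1 + t) ^ k ≤ A * Real.exp (t / 2) := by
  set n : ℕ := 2 * k + 1 with hn
  refine ⟨(n : ℝ) ^ n, one_le_pow₀ (by exact_mod_cast Nat.one_le_iff_ne_zero.2 (by omega)), ?_⟩
  intro t ht
  set s : ℝ := t / 2 with hs
  have hs0 : 0 ≤ s := by positivity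
  have hnpos : (0:ℝ) < n := by exact_mod_cast Nat.succ_pos _
  have h1 : (1 + t) ^ k ≤ (1 + s) ^ n := by
    have h2 : (1 + t) ≤ (1 + s) ^ 2 := by nlinarith
    calc (1 + t) ^ k ≤ ((1 + s) ^ 2) ^ k := by
          exact pow_le_pow_left₀ (by linarith) h2 k
      _ = (1 + s) ^ (2 * k) := by rw [← pow_mul]
      _ ≤ (1 + s) ^ n := pow_le_pow_right₀ (by linarith) (by omega)
  have h3 : (1 + s) ^ n ≤ ((n : ℝ) * (1 + s / n)) ^ n := by
    refine pow_le_pow_left₀ (by linarith) ?_ n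
    have : (n : ℝ) * (1 + s / n) = n + s := by field_simp
    rw [this]
    have : (1:ℝ) ≤ n := by exact_mod_cast Nat.one_le_iff_ne_zero.2 (by omega)
    linarith
  have h4 : ((n : ℝ) * (1 + s / n)) ^ n = (n : ℝ) ^ n * (1 + s / n) ^ n := mul_pow _ _ _
  have h5 : (1 + s / n) ^ n ≤ Real.exp s := by
    have hle : 1 + s / n ≤ Real.exp (s / n) := by
      have := Real.add_one_le_exp (s / n); linarith
    calc (1 + s / n) ^ n ≤ (Real.exp (s / n)) ^ n :=
          pow_le_pow_left₀ (by positivity) hle n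
      _ = Real.exp ((n : ℝ) * (s / n)) := by rw [← Real.exp_nat_mul]
      _ = Real.exp s := by rw [mul_div_cancel₀ _ (ne_of_gt hnpos)]
  calc (1 + t) ^ k ≤ (1 + s) ^ n := h1
    _ ≤ (n : ℝ) ^ n * (1 + s / n) ^ n := by rw [← h4]; exact h3
    _ ≤ (n : ℝ) ^ n * Real.exp s := by
        exact mul_le_mul_of_nonneg_left h5 (by positivity)

private lemma main_pos (k : ℕ) :
    ∃ C : ℝ, 0 < C ∧ ∀ x : ℝ, 0 < x →
      ∫ z : ℝ, Real.exp (-|z|) * (1 + |x - z|) ^ k * Real.exp (-|x - z|) ≤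
        C * Real.exp (-x) * (1 + x) ^ (k + 1) := by
  obtain ⟨A, hA1, hA⟩ := pow_le_exp_aux k
  refine ⟨2 * A, by linarith, ?_⟩
  intro x hx
  set g : ℝ → ℝ := fun z => Real.exp (-((|z| + |x - z| - x) / 2)) with hg_def
  have hg_cont : Continuous g := by fun_prop
  have hg_le : ∀ z, g z ≤ Real.exp x * Real.exp (-|z|) := by
    intro z
    rw [← Real.exp_add]
    apply Real.exp_le_exp.mpr
    have h1 : |z| - x ≤ |x - z| := by
      have := abs_sub_abs_le_abs_sub z x
      have hxx : |x| = x := abs_of_pos hx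
      rw [abs_sub_comm] at this
      linarith
    linarith
  have hg_int : Integrable g := by
    refine (Integrable.const_mul exp_neg_abs_integrable (Real.exp x)).mono'
      hg_cont.aestronglyMeasurable ?_
    filter_upwards with z
    rw [Real.norm_eq_abs, abs_of_pos (Real.exp_pos _)]
    exact hg_le z
  have hconst_nonneg : 0 ≤ A * Real.exp (-x) * (1 + x) ^ k := by positivity
  -- pointwise bound
  have hpt : ∀ z : ℝ, Real.exp (-|z|) * (1 + |x - z|) ^ k * Real.exp (-|x - z|) ≤
      A * Real.exp (-x) * (1 + x) ^ k * g z := by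
    intro z
    set u : ℝ := |z| + |x - z| - x with hu_def
    have hu0 : 0 ≤ u := by
      have h1 : |x| ≤ |z| + |x - z| := by
        calc |x| = |z + (x - z)| := by ring_nf
          _ ≤ |z| + |x - z| := abs_add_le _ _
      have hxx : |x| = x := abs_of_pos hx
      rw [hu_def]; linarith
    have hxz : |x - z| ≤ x + u := by
      rw [hu_def]
      have := abs_nonneg z
      linarith
    have hb : (1 + |x - z|) ^ k ≤ ((1 + x) * (1 + u)) ^ k := by
      refine pow_le_pow_left₀ (by positivity) ?_ k
      nlinarith
    have hexp_eq : Real.exp (-|z|) * Real.exp (-|x - z|) = Real.exp (-x) * Real.exp (-u) := by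
      rw [← Real.exp_add, ← Real.exp_add]
      congr 1
      rw [hu_def]; ring
    have hgz : g z = Real.exp (-(u / 2)) := by rw [hg_def, hu_def]
    calc Real.exp (-|z|) * (1 + |x - z|) ^ k * Real.exp (-|x - z|)
        = (Real.exp (-x) * Real.exp (-u)) * (1 + |x - z|) ^ k := by
          rw [← hexp_eq]; ring
      _ ≤ (Real.exp (-x) * Real.exp (-u)) * ((1 + x) * (1 + u)) ^ k := by
          exact mul_le_mul_of_nonneg_left hb (by positivity)
      _ = Real.exp (-x) * (1 + x) ^ k * ((1 + u) ^ k * Real.exp (-u)) := by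
          rw [mul_pow]; ring
      _ ≤ Real.exp (-x) * (1 + x) ^ k * ((A * Real.exp (u / 2)) * Real.exp (-u)) := by
          refine mul_le_mul_of_nonneg_left ?_ (by positivity)
          exact mul_le_mul_of_nonneg_right (hA u hu0) (Real.exp_pos _).le
      _ = A * Real.exp (-x) * (1 + x) ^ k * g z := by
          rw [hgz, mul_assoc A, ← Real.exp_add]
          ring_nf
  -- integral of g equals x + 2
  have hIic : ∫ z in Iic (0:ℝ), g z = 1 := by
    have heq : EqOn g (fun z : ℝ => Real.exp z) (Iic 0) := by
      intro z hz
      simp only [mem_Iic] at hz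
      rw [hg_def]
      simp only
      congr 1
      rw [abs_of_nonpos hz, abs_of_pos (by linarith : 0 < x - z)]
      ring
    rw [setIntegral_congr_fun measurableSet_Iic heq]
    exact integral_exp_Iic_zero
  have hIoc : ∫ z in Ioc (0:ℝ) x, g z = x := by
    have heq : EqOn g (fun _ : ℝ => (1:ℝ)) (Ioc 0 x) := by
      intro z hz
      simp only [mem_Ioc] at hz
      rw [hg_def]
      have : |z| + |x - z| - x = 0 := by
        rw [abs_of_pos hz.1, abs_of_nonneg (by linarith : (0:ℝ) ≤ x - z)]
        ring
      simp [this]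
    rw [setIntegral_congr_fun measurableSet_Ioc heq]
    rw [setIntegral_const, Real.volume_real_Ioc_of_le hx.le, smul_eq_mul]
    ring
  have hIoi : ∫ z in Ioi x, g z = 1 := by
    have heq : EqOn g (fun z : ℝ => Real.exp x * Real.exp (-z)) (Ioi x) := by
      intro z hz
      simp only [mem_Ioi] at hz
      rw [hg_def]
      simp only [← Real.exp_add]
      congr 1
      rw [abs_of_pos (by linarith : 0 < z), abs_of_neg (by linarith : x - z < 0)]
      ring
    rw [setIntegral_congr_fun measurableSet_Ioi heq]
    rw [integral_const_mul, integral_exp_neg_Ioi, ← Real.exp_add]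
    simp
  have hg_total : ∫ z, g z = x + 2 := by
    rw [← intervalIntegral.integral_Iic_add_Ioi (b := (0:ℝ)) hg_int.integrableOn hg_int.integrableOn]
    have hsplit : Ioc (0:ℝ) x ∪ Ioi x = Ioi 0 := Ioc_union_Ioi_eq_Ioi hx.le
    have : ∫ z in Ioi (0:ℝ), g z = (∫ z in Ioc (0:ℝ) x, g z) + ∫ z in Ioi x, g z := by
      rw [← setIntegral_union (Ioc_disjoint_Ioi le_rfl) measurableSet_Ioi
        hg_int.integrableOn hg_int.integrableOn, hsplit]
    rw [this, hIic, hIoc, hIoi]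
    ring
  -- combine
  have hmono : ∫ z : ℝ, Real.exp (-|z|) * (1 + |x - z|) ^ k * Real.exp (-|x - z|) ≤
      ∫ z : ℝ, A * Real.exp (-x) * (1 + x) ^ k * g z := by
    refine integral_mono_of_nonneg ?_ (hg_int.const_mul _) ?_
    · filter_upwards with z
      positivity
    · filter_upwards with z
      exact hpt z
  calc ∫ z : ℝ, Real.exp (-|z|) * (1 + |x - z|) ^ k * Real.exp (-|x - z|)
      ≤ ∫ z : ℝ, A * Real.exp (-x) * (1 + x) ^ k * g z := hmono
    _ = A * Real.exp (-x) * (1 + x) ^ k * (x + 2) := by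
        rw [integral_const_mul, hg_total]
    _ ≤ 2 * A * Real.exp (-x) * (1 + x) ^ (k + 1) := by
        rw [pow_succ]
        have h2 : x + 2 ≤ 2 * (1 + x) := by linarith
        calc A * Real.exp (-x) * (1 + x) ^ k * (x + 2)
            ≤ A * Real.exp (-x) * (1 + x) ^ k * (2 * (1 + x)) := by
              exact mul_le_mul_of_nonneg_left h2 hconst_nonneg
          _ = 2 * A * Real.exp (-x) * ((1 + x) ^ k * (1 + x)) := by ring

private lemma neg_subst (f : ℝ → ℝ) : ∫ z : ℝ, f (-z) = ∫ z : ℝ, f z := by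
  have A : MeasurableEmbedding (fun x : ℝ => -x) :=
    (Homeomorph.neg ℝ).measurableEmbedding
  conv_rhs => rw [← Measure.map_neg_eq_self (volume : Measure ℝ)]
  rw [A.integral_map]

/-- Lemma 1, case `κ = -1`, `m ≥ 0`: for all `|x| > 3`,
`∫ e^{-|z|} (1+|x-z|)^m e^{-|x-z|} dz ≤ C e^{-|x|} (1+|x|)^{m+1}`. -/
theorem integral_estimate_kappa_neg_one (m : ℤ) (hm : 0 ≤ m) :
    ∃ C : ℝ, 0 < C ∧ ∀ x : ℝ, 3 < |x| →
      ∫ z : ℝ, Real.exp (-|z|) * (1 + |x - z|) ^ m * Real.exp (-|x - z|) ≤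
        C * Real.exp (-|x|) * (1 + |x|) ^ (m + 1) := by
  obtain ⟨k, rfl⟩ : ∃ k : ℕ, m = (k : ℤ) := ⟨m.toNat, (Int.toNat_of_nonneg hm).symm⟩
  obtain ⟨C, hC, hmain⟩ := main_pos k
  refine ⟨C, hC, ?_⟩
  intro x hxabs
  have hzpow : ∀ y t : ℝ, 0 ≤ t → (1 + t) ^ (k:ℤ) = (1 + t) ^ k := fun y t ht => zpow_natCast _ k
  have hzpow1 : ((k:ℤ) + 1) = ((k + 1 : ℕ) : ℤ) := by push_cast; ring
  simp_rw [hzpow1, zpow_natCast]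
  rcases lt_or_ge 0 x with hx | hx
  · have hxx : |x| = x := abs_of_pos hx
    rw [hxx]
    exact hmain x hx
  · have hxneg : x < 0 := by
      rcases lt_or_eq_of_le hx with h | h
      · exact h
      · exfalso; rw [h] at hxabs; simp at hxabs; linarith
    have hxx : |x| = -x := abs_of_neg hxneg
    have hflip : (∫ z : ℝ, Real.exp (-|z|) * (1 + |x - z|) ^ k * Real.exp (-|x - z|)) =
        ∫ z : ℝ, Real.exp (-|z|) * (1 + |(-x) - z|) ^ k * Real.exp (-|(-x) - z|) := by
      rw [← neg_subst (fun z => Real.exp (-|z|) * (1 + |(-x) - z|) ^ k * Real.exp (-|(-x) - z|))]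
      congr 1
      funext z
      have h1 : |(-x) - (-z)| = |x - z| := by rw [← abs_neg]; ring_nf
      rw [abs_neg, h1]
    rw [hflip, hxx]
    exact hmain (-x) (by linarith)
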